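/- Let u and w be pin words and let u = u^(1)…u^(j) be the strong numeral-led factor decomposition of u. Then u ≼ w if and only if w can be factored as w = v^(1)w^(1)v^(2)w^(2)…v^(j)w^(j)v^(j+1) such that for every i ∈ {1,…,j}, w^(i) belongs to SP ∪ M and φ(w^(i)) has a factor in φ(u^(i)). -/

import Mathlib

namespace PinStmt

abbrev Point : Type := ℝ × ℝ

inductive Letter : Type
  | n1 | n2 | n3 | n4 | U | D | L | R
deriving DecidableEq

def Letter.isNum : Letter → Bool
  | .n1 | .n2 | .n3 | .n4 => true
  | _ => false

/-- `c` is one of the numeral letters 1,2,3,4. -/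
def Letter.IsNumeral (c : Letter) : Prop := c.isNum = true

/-- `c` is one of the direction letters U,D,L,R. -/
def Letter.IsDirection (c : Letter) : Prop := c.isNum = false

/-- `q i` lies strictly above all of `q 0, …, q (i-1)`. -/
def AboveAll (q : ℕ → Point) (i : ℕ) : Prop := ∀ j < i, (q j).2 < (q i).2
def BelowAll (q : ℕ → Point) (i : ℕ) : Prop := ∀ j < i, (q i).2 < (q j).2
def RightAll (q : ℕ → Point) (i : ℕ) : Prop := ∀ j < i, (q j).1 < (q i).1
def LeftAll  (q : ℕ → Point) (i : ℕ) : Prop := ∀ j < i, (q i).1 < (q j).1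

/-- The vertical line through `q i` strictly separates `q (i-1)` from `{q j | j < i-1}`. -/
def VLineSep (q : ℕ → Point) (i : ℕ) : Prop :=
  ((q (i - 1)).1 < (q i).1 ∧ ∀ j < i - 1, (q i).1 < (q j).1) ∨
  ((q i).1 < (q (i - 1)).1 ∧ ∀ j < i - 1, (q j).1 < (q i).1)

/-- The horizontal line through `q i` strictly separates `q (i-1)` from `{q j | j < i-1}`. -/
def HLineSep (q : ℕ → Point) (i : ℕ) : Prop :=
  ((q (i - 1)).2 < (q i).2 ∧ ∀ j < i - 1, (q i).2 < (q j).2) ∨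
  ((q i).2 < (q (i - 1)).2 ∧ ∀ j < i - 1, (q j).2 < (q i).2)

/-- Separation condition for the pin `q i`. -/
def SepCond (q : ℕ → Point) (i : ℕ) : Prop := VLineSep q i ∨ HLineSep q i

/-- Independence condition: neither line through `q i` splits `{q j | j < i}` in two
nonempty parts. -/
def IndepCond (q : ℕ → Point) (i : ℕ) : Prop :=
  ¬((∃ j < i, (q j).1 < (q i).1) ∧ (∃ j < i, (q i).1 < (q j).1)) ∧
  ¬((∃ j < i, (q j).2 < (q i).2) ∧ (∃ j < i, (q i).2 < (q j).2))

/-- `q i` lies outside the bounding box of `{q j | j < i}`. -/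
def OutsideBox (q : ℕ → Point) (i : ℕ) : Prop :=
  RightAll q i ∨ LeftAll q i ∨ AboveAll q i ∨ BelowAll q i

/-- `(q 0, …, q (m-1))` is a pin sequence. -/
def IsPinSeq (q : ℕ → Point) (m : ℕ) : Prop :=
  (∀ i < m, ∀ j < m, i ≠ j → (q i).1 ≠ (q j).1 ∧ (q i).2 ≠ (q j).2) ∧
  (∀ i, 1 ≤ i → i < m → OutsideBox q i ∧ (SepCond q i ∨ IndepCond q i))

/-- `(p 0, …, p (n-1))` is a pin representation of `σ`, where `f` sends the time index of a
pin to the position (index) of the corresponding point in the diagram of `σ`. -/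
def IsPinReprWith {n : ℕ} (σ : Equiv.Perm (Fin n)) (p : ℕ → Point)
    (f : Fin n ≃ Fin n) : Prop :=
  IsPinSeq p n ∧ ∀ j k : Fin n,
    ((p j.val).1 < (p k.val).1 ↔ f j < f k) ∧
    ((p j.val).2 < (p k.val).2 ↔ σ (f j) < σ (f k))

def IsPinRepr {n : ℕ} (σ : Equiv.Perm (Fin n)) (p : ℕ → Point) : Prop :=
  ∃ f, IsPinReprWith σ p f

/-- `σ` is a pin-permutation. -/
def IsPinPerm {n : ℕ} (σ : Equiv.Perm (Fin n)) : Prop := ∃ p, IsPinRepr σ p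

/-- Prepend the origin `p0` to the sequence of pins `p`. -/
def withOrigin (p0 : Point) (p : ℕ → Point) : ℕ → Point
  | 0 => p0
  | i + 1 => p i

/-- The letter encoding the pin `q i` (where `q 0` is the origin). -/
def LetterIs (q : ℕ → Point) (i : ℕ) : Letter → Prop
  | .U => 2 ≤ i ∧ SepCond q i ∧ AboveAll q i
  | .D => 2 ≤ i ∧ SepCond q i ∧ BelowAll q i
  | .L => 2 ≤ i ∧ SepCond q i ∧ LeftAll q i
  | .R => 2 ≤ i ∧ SepCond q i ∧ RightAll q i
  | .n1 => IndepCond q i ∧ RightAll q i ∧ AboveAll q i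
  | .n2 => IndepCond q i ∧ LeftAll q i ∧ AboveAll q i
  | .n3 => IndepCond q i ∧ LeftAll q i ∧ BelowAll q i
  | .n4 => IndepCond q i ∧ RightAll q i ∧ BelowAll q i

/-- `w` is the pin word associated with the pin sequence `(q 0, q 1, …, q n)`,
whose origin is `q 0`. -/
def WordOf (q : ℕ → Point) (n : ℕ) (w : List Letter) : Prop :=
  w.length = n ∧ ∀ i < n, LetterIs q (i + 1) (w.getD i Letter.U)

/-- `P(σ)`: the set of pin words of the permutation `σ`. -/
def PinWords {n : ℕ} (σ : Equiv.Perm (Fin n)) : Set (List Letter) :=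
  { w | ∃ (p : ℕ → Point) (p0 : Point), IsPinRepr σ p ∧
        IsPinSeq (withOrigin p0 p) (n + 1) ∧ WordOf (withOrigin p0 p) n w }

/-- The set of pin words associated with the fixed pin representation `p`
over all admissible origins. -/
def WordsOfRepr (n : ℕ) (p : ℕ → Point) : Set (List Letter) :=
  { w | ∃ p0 : Point, IsPinSeq (withOrigin p0 p) (n + 1) ∧ WordOf (withOrigin p0 p) n w }

/-- `(p 0, …, p (n-1))` is a proper pin sequence: every pin from the third one on
satisfies the separation condition. -/
def IsProperSeq (p : ℕ → Point) (n : ℕ) : Prop :=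
  IsPinSeq p n ∧ ∀ i, 2 ≤ i → i < n → SepCond p i

/-- `σ` is a proper pin-permutation. -/
def IsProperPinPerm {n : ℕ} (σ : Equiv.Perm (Fin n)) : Prop :=
  ∃ p, IsPinRepr σ p ∧ IsProperSeq p n

/-- A strict pin word: a numeral followed only by directions. -/
def IsStrict (w : List Letter) : Prop :=
  ∃ c cs, w = c :: cs ∧ c.IsNumeral ∧ ∀ d ∈ cs, d.IsDirection

/-- A quasi-strict pin word: two numerals followed only by directions. -/
def IsQuasiStrict (w : List Letter) : Prop :=
  ∃ c₁ c₂ cs, w = c₁ :: c₂ :: cs ∧ c₁.IsNumeral ∧ c₂.IsNumeral ∧ ∀ d ∈ cs, d.IsDirection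

/-- `w` is a pin word (of some permutation). -/
def IsPinWord (w : List Letter) : Prop :=
  ∃ (n : ℕ) (σ : Equiv.Perm (Fin n)), w ∈ PinWords σ

/-- `SP`: the set of strict pin words. -/
def SPset : Set (List Letter) := { w | IsPinWord w ∧ IsStrict w }

def phi2 : Letter → Letter → List Letter
  | .n1, .R => [.R, .U, .R]
  | .n2, .R => [.L, .U, .R]
  | .n3, .R => [.L, .D, .R]
  | .n4, .R => [.R, .D, .R]
  | .n1, .L => [.R, .U, .L]
  | .n2, .L => [.L, .U, .L]
  | .n3, .L => [.L, .D, .L]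
  | .n4, .L => [.R, .D, .L]
  | .n1, .U => [.U, .R, .U]
  | .n2, .U => [.U, .L, .U]
  | .n3, .U => [.D, .L, .U]
  | .n4, .U => [.D, .R, .U]
  | .n1, .D => [.U, .R, .D]
  | .n2, .D => [.U, .L, .D]
  | .n3, .D => [.D, .L, .D]
  | .n4, .D => [.D, .R, .D]
  | _, _ => []

def phi1 : Letter → Set (List Letter)
  | .n1 => {[.U, .R], [.R, .U]}
  | .n2 => {[.U, .L], [.L, .U]}
  | .n3 => {[.D, .L], [.L, .D]}
  | .n4 => {[.R, .D], [.D, .R]}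
  | _ => ∅

def phiInv2 : Letter → Letter → Letter
  | .U, .R => .n1
  | .R, .U => .n1
  | .U, .L => .n2
  | .L, .U => .n2
  | .D, .L => .n3
  | .L, .D => .n3
  | .R, .D => .n4
  | .D, .R => .n4
  | _, _ => .n1

/-- `φ(u)`, as a set of words: a two-element set when `u` is a single numeral,
a singleton `{φ(u)}` when `u` is a strict pin word of length at least 2, and
the identity (as a singleton) on words of `M`. -/
def phiSet : List Letter → Set (List Letter)
  | [] => {[]}
  | [c] => if c.isNum then phi1 c else {[c]}
  | c :: d :: rest => if c.isNum then {phi2 c d ++ rest} else {c :: d :: rest}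

/-- The quadrant numeral `q(c,d)`. -/
def quadNum (c d : Letter) : Letter :=
  if c.isNum then
    match phi2 c d with
    | [_, b, e] => phiInv2 b e
    | _ => Letter.n1
  else phiInv2 c d

/-- `us` is the strong numeral-led factor decomposition of `u`. -/
def IsSNLD (u : List Letter) (us : List (List Letter)) : Prop :=
  us.flatten = u ∧ ∀ v ∈ us, IsStrict v

def interleave : List (List Letter) → List (List Letter) → List Letter
  | [], _ => []
  | v :: vs, [] => v ++ interleave vs []
  | v :: vs, w :: ws => v ++ w ++ interleave vs ws

/-- The condition on the pieces `v^(i)`, `w^(i)`, `u^(i)` in the definition of `≼`. -/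
def PieceCond (v wi ui : List Letter) : Prop :=
  (∃ c cs, wi = c :: cs ∧ c.IsNumeral ∧ wi = ui) ∨
  (∃ d ds c, wi = d :: ds ∧ d.IsDirection ∧ v ≠ [] ∧ v.getLast? = some c ∧
    ui = quadNum c d :: ds)

/-- The order `u ≼ w` on pin words. -/
def PinOrder (u w : List Letter) : Prop :=
  ∃ us, IsSNLD u us ∧
    ∃ vs ws : List (List Letter), ws.length = us.length ∧ vs.length = us.length + 1 ∧
      w = interleave vs ws ∧
      ∀ i < us.length, PieceCond (vs.getD i []) (ws.getD i []) (us.getD i [])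

def IsVert (c : Letter) : Prop := c = Letter.U ∨ c = Letter.D
def IsHoriz (c : Letter) : Prop := c = Letter.L ∨ c = Letter.R

/-- `M`: words over `{U,D,L,R}` of length at least 2 with no factor in
`{UU,UD,DU,DD,LL,LR,RL,RR}`. -/
def MSet : Set (List Letter) :=
  { w | 2 ≤ w.length ∧ (∀ c ∈ w, c.IsDirection) ∧
        ∀ a c : Letter, [a, c] <:+: w →
          ¬(IsVert a ∧ IsVert c) ∧ ¬(IsHoriz a ∧ IsHoriz c) }

/-- `A*`: all words over the direction alphabet `A = {U,D,L,R}`. -/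
def Astar : Set (List Letter) := { w | ∀ c ∈ w, c.IsDirection }

/-- Concatenation of languages. -/
def LMul (X Y : Set (List Letter)) : Set (List Letter) :=
  { w | ∃ x ∈ X, ∃ y ∈ Y, w = x ++ y }

/-- The language `L(u) = A* φ(u^(1)) A* φ(u^(2)) … A* φ(u^(j)) A*`. -/
def LangOf (u : List Letter) : Set (List Letter) :=
  { m | ∃ us, IsSNLD u us ∧
      ∃ vs ws : List (List Letter), ws.length = us.length ∧ vs.length = us.length + 1 ∧
        m = interleave vs ws ∧ (∀ v ∈ vs, v ∈ Astar) ∧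
        ∀ i < us.length, ws.getD i [] ∈ phiSet (us.getD i []) }

/-- The language `L_π = ⋃_{u ∈ P(π)} L(u)`. -/
def Lperm {n : ℕ} (π : Equiv.Perm (Fin n)) : Set (List Letter) :=
  { m | ∃ u ∈ PinWords π, m ∈ LangOf u }

/-- `π ≤ σ`: the permutation `π` is a pattern of the permutation `σ`. -/
def IsPattern {k n : ℕ} (π : Equiv.Perm (Fin k)) (σ : Equiv.Perm (Fin n)) : Prop :=
  ∃ g : Fin k → Fin n, StrictMono g ∧ ∀ a b : Fin k, (π a < π b ↔ σ (g a) < σ (g b))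

/-- `q i` lies in the quadrant (given by a numeral letter) of the bounding box of
`{q j | j < m}`. -/
def InQuadOf (q : ℕ → Point) (i m : ℕ) : Letter → Prop
  | .n1 => (∀ j < m, (q j).1 < (q i).1) ∧ (∀ j < m, (q j).2 < (q i).2)
  | .n2 => (∀ j < m, (q i).1 < (q j).1) ∧ (∀ j < m, (q j).2 < (q i).2)
  | .n3 => (∀ j < m, (q i).1 < (q j).1) ∧ (∀ j < m, (q i).2 < (q j).2)
  | .n4 => (∀ j < m, (q j).1 < (q i).1) ∧ (∀ j < m, (q i).2 < (q j).2)
  | _ => False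


/-- `σ = ⊕[π_0, …, π_(r-1)]` where the `k`-th child occupies positions and values
`[b k, b (k+1))`. -/
def SumDecomp {n : ℕ} (σ : Equiv.Perm (Fin n)) (r : ℕ) (b : ℕ → ℕ) : Prop :=
  b 0 = 0 ∧ b r = n ∧ (∀ k < r, b k < b (k + 1)) ∧
  ∀ k < r, ∀ i : Fin n, b k ≤ i.val → i.val < b (k + 1) →
    b k ≤ (σ i).val ∧ (σ i).val < b (k + 1)

/-- The child of `σ` occupying positions `[lo, hi)` is ⊕-indecomposable. -/
def ChildIndecomp {n : ℕ} (σ : Equiv.Perm (Fin n)) (lo hi : ℕ) : Prop :=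
  ¬ ∃ m, lo < m ∧ m < hi ∧ ∀ i : Fin n, lo ≤ i.val → i.val < m → (σ i).val < m

/-- The pin read at time `a` belongs to the `k`-th child (`f` sends times to positions). -/
def PinInChild {n : ℕ} (b : ℕ → ℕ) (f : Fin n ≃ Fin n) (a : Fin n) (k : ℕ) : Prop :=
  b k ≤ (f a).val ∧ (f a).val < b (k + 1)

/-- The set of (times of) pins belonging to the `k`-th child. -/
def ChildPins {n : ℕ} (b : ℕ → ℕ) (f : Fin n ≃ Fin n) (k : ℕ) : Set (Fin n) :=
  { a | PinInChild b f a k }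

/-- The starting times of the maximal runs of consecutive reading times in `S`. -/
def PieceStarts {n : ℕ} (S : Set (Fin n)) : Set (Fin n) :=
  { a | a ∈ S ∧ ∀ c : Fin n, c.val + 1 = a.val → c ∉ S }

/-- `S` is read in exactly `k` pieces. -/
def ReadInPieces {n : ℕ} (S : Set (Fin n)) (k : ℕ) : Prop := (PieceStarts S).ncard = k

/-- The pins of `D` are all read before the pins of `C`. -/
def ReadBefore {n : ℕ} (D C : Set (Fin n)) : Prop := ∀ a ∈ D, ∀ c ∈ C, a < c

/-- The infinite oscillating sequence `ω = 3 1 5 2 7 4 9 6 …` (1-indexed). -/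
def omegaSeq (i : ℕ) : ℕ := if i = 2 then 1 else if i % 2 = 1 then i + 2 else i - 2

/-- `π` is a pattern of some prefix of the infinite oscillating sequence `ω`. -/
def IsOmegaPattern {k : ℕ} (π : Equiv.Perm (Fin k)) : Prop :=
  ∃ g : Fin k → ℕ, StrictMono g ∧ (∀ a, 1 ≤ g a) ∧
    ∀ a b : Fin k, (π a < π b ↔ omegaSeq (g a) < omegaSeq (g b))

/-- The interval of positions `[lo, lo+len)` is a block of `σ`. -/
def IsBlockOf {n : ℕ} (σ : Equiv.Perm (Fin n)) (lo len : ℕ) : Prop :=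
  lo + len ≤ n ∧ ∃ vlo, ∀ i : Fin n,
    (lo ≤ i.val ∧ i.val < lo + len) ↔ (vlo ≤ (σ i).val ∧ (σ i).val < vlo + len)

/-- `σ` is a simple permutation. -/
def IsSimplePerm {n : ℕ} (σ : Equiv.Perm (Fin n)) : Prop :=
  4 ≤ n ∧ ∀ lo len, IsBlockOf σ lo len → len ≤ 1 ∨ len = n

/-- `π` is the permutation whose one-line notation is the list `l`. -/
def PermMatches {k : ℕ} (π : Equiv.Perm (Fin k)) (l : List ℕ) : Prop :=
  l.length = k ∧ ∀ i : Fin k, (π i).val + 1 = l.getD i.val 0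

/-- `ξ` is an increasing oscillation. -/
def IsIncrOsc {k : ℕ} (ξ : Equiv.Perm (Fin k)) : Prop :=
  PermMatches ξ [1] ∨ PermMatches ξ [2, 1] ∨ PermMatches ξ [2, 3, 1] ∨
  PermMatches ξ [3, 1, 2] ∨ (4 ≤ k ∧ IsSimplePerm ξ ∧ IsOmegaPattern ξ)

/-- The child of `σ` occupying positions `[lo, hi)` is order-isomorphic to `ξ`. -/
def ChildIsPerm {n m : ℕ} (σ : Equiv.Perm (Fin n)) (lo hi : ℕ)
    (ξ : Equiv.Perm (Fin m)) : Prop :=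
  lo + m = hi ∧ ∀ (a c : Fin m) (ia ic : Fin n), ia.val = lo + a.val → ic.val = lo + c.val →
    ((σ ia).val < (σ ic).val ↔ (ξ a).val < (ξ c).val)

/-- The child of `σ` occupying positions `[lo, hi)` is an increasing oscillation. -/
def ChildIsIncrOsc {n : ℕ} (σ : Equiv.Perm (Fin n)) (lo hi : ℕ) : Prop :=
  ∃ (m : ℕ) (ξ : Equiv.Perm (Fin m)), IsIncrOsc ξ ∧ ChildIsPerm σ lo hi ξ

/-- `τ = ⊕[ξ, η]`. -/
def IsDSum2 {m k l : ℕ} (τ : Equiv.Perm (Fin m)) (ξ : Equiv.Perm (Fin k))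
    (η : Equiv.Perm (Fin l)) : Prop :=
  m = k + l ∧ (∀ i : Fin m, i.val < k → (τ i).val < k) ∧
    ChildIsPerm τ 0 k ξ ∧ ChildIsPerm τ k m η

/-- The origin `p0` lies in quadrant 1 of the bounding box of `{p j | j < n}`. -/
def OriginQ1 (p0 : Point) (p : ℕ → Point) (n : ℕ) : Prop :=
  ∀ j < n, (p j).1 < p0.1 ∧ (p j).2 < p0.2

/-- The origin `p0` lies in quadrant 3 of the bounding box of `{p j | j < n}`. -/
def OriginQ3 (p0 : Point) (p : ℕ → Point) (n : ℕ) : Prop :=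
  ∀ j < n, p0.1 < (p j).1 ∧ p0.2 < (p j).2

/-- `P^(1)(ξ)`: pin words of `ξ` whose origin lies in quadrant 1 w.r.t. the points of `ξ`. -/
def PinWordsQ1 {n : ℕ} (ξ : Equiv.Perm (Fin n)) : Set (List Letter) :=
  { w | ∃ (p : ℕ → Point) (p0 : Point), IsPinRepr ξ p ∧
        IsPinSeq (withOrigin p0 p) (n + 1) ∧ WordOf (withOrigin p0 p) n w ∧ OriginQ1 p0 p n }

/-- `P^(3)(ξ)`: pin words of `ξ` whose origin lies in quadrant 3 w.r.t. the points of `ξ`. -/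
def PinWordsQ3 {n : ℕ} (ξ : Equiv.Perm (Fin n)) : Set (List Letter) :=
  { w | ∃ (p : ℕ → Point) (p0 : Point), IsPinRepr ξ p ∧
        IsPinSeq (withOrigin p0 p) (n + 1) ∧ WordOf (withOrigin p0 p) n w ∧ OriginQ3 p0 p n }

/-- The shuffle product of two sequences of sets of words. -/
def ShuffleSeq : List (Set (List Letter)) → List (Set (List Letter)) → Set (List Letter)
  | [], [] => {[]}
  | X :: As, [] => { w | ∃ x ∈ X, ∃ t ∈ ShuffleSeq As [], w = x ++ t }
  | [], Y :: Bs => { w | ∃ y ∈ Y, ∃ t ∈ ShuffleSeq ([] : List (Set (List Letter))) Bs, w = y ++ t }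
  | X :: As, Y :: Bs =>
      { w | (∃ x ∈ X, ∃ t ∈ ShuffleSeq As (Y :: Bs), w = x ++ t) ∨
            (∃ y ∈ Y, ∃ t ∈ ShuffleSeq (X :: As) Bs, w = y ++ t) }
  termination_by A B => A.length + B.length

/-- The `p`-fold repetition `x^p` of the word `x`. -/
def repW (p : ℕ) (x : List Letter) : List Letter := (List.replicate p x).flatten

/-- The points of `ξ` at positions `i` and `j` form an active knight of `ξ`:
they occur (in some order) as the first two pins of some pin representation of `ξ`. -/
def ActiveKnight {k : ℕ} (ξ : Equiv.Perm (Fin k)) (i j : Fin k) : Prop :=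
  ∃ (p : ℕ → Point) (f : Fin k ≃ Fin k) (h2 : 2 ≤ k),
    IsPinReprWith ξ p f ∧
    ((f ⟨0, by omega⟩ = i ∧ f ⟨1, by omega⟩ = j) ∨
     (f ⟨0, by omega⟩ = j ∧ f ⟨1, by omega⟩ = i))

/-- The points at positions `i`, `j` are in horizontal knight position. -/
def KnightH {k : ℕ} (ξ : Equiv.Perm (Fin k)) (i j : Fin k) : Prop :=
  (i.val + 2 = j.val ∨ j.val + 2 = i.val) ∧
  ((ξ i).val + 1 = (ξ j).val ∨ (ξ j).val + 1 = (ξ i).val)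

/-- The points at positions `i`, `j` are in vertical knight position. -/
def KnightV {k : ℕ} (ξ : Equiv.Perm (Fin k)) (i j : Fin k) : Prop :=
  (i.val + 1 = j.val ∨ j.val + 1 = i.val) ∧
  ((ξ i).val + 2 = (ξ j).val ∨ (ξ j).val + 2 = (ξ i).val)

inductive KType : Type
  | H | V

def KnightOfType {k : ℕ} (t : KType) (ξ : Equiv.Perm (Fin k)) (i j : Fin k) : Prop :=
  match t with
  | .H => KnightH ξ i j
  | .V => KnightV ξ i j

/-- The increasing oscillation `ξ` has type `(x, y)`: its lower-left active knight
(the one containing the leftmost point) has knight-position type `x` and its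
upper-right active knight (the one containing the rightmost point) has type `y`. -/
def HasOscType {k : ℕ} (ξ : Equiv.Perm (Fin k)) (x y : KType) : Prop :=
  ∃ i j i' j' : Fin k, ActiveKnight ξ i j ∧ ActiveKnight ξ i' j' ∧
    i.val = 0 ∧ j'.val + 1 = k ∧ KnightOfType x ξ i j ∧ KnightOfType y ξ i' j'

/-- The permutation 21. -/
def perm21 : Equiv.Perm (Fin 2) := Equiv.swap 0 1

/-- The permutation 12. -/
def perm12 : Equiv.Perm (Fin 2) := Equiv.refl (Fin 2)

def EndsH (w : List Letter) : Prop := w.getLast? = some Letter.R ∨ w.getLast? = some Letter.L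
def EndsV (w : List Letter) : Prop := w.getLast? = some Letter.U ∨ w.getLast? = some Letter.D

/-- `Q⁻`: quasi-strict pin words of 21. -/
def Qminus : Set (List Letter) := { w | w ∈ PinWords perm21 ∧ IsQuasiStrict w }
/-- `S⁻_H`: strict pin words of 21 ending with R or L. -/
def SminusH : Set (List Letter) := { w | w ∈ PinWords perm21 ∧ IsStrict w ∧ EndsH w }
/-- `S⁻_V`: strict pin words of 21 ending with U or D. -/
def SminusV : Set (List Letter) := { w | w ∈ PinWords perm21 ∧ IsStrict w ∧ EndsV w }
/-- `Q⁺`: quasi-strict pin words of 12. -/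
def Qplus : Set (List Letter) := { w | w ∈ PinWords perm12 ∧ IsQuasiStrict w }
/-- `S⁺_H`: strict pin words of 12 ending with R or L. -/
def SplusH : Set (List Letter) := { w | w ∈ PinWords perm12 ∧ IsStrict w ∧ EndsH w }
/-- `S⁺_V`: strict pin words of 12 ending with U or D. -/
def SplusV : Set (List Letter) := { w | w ∈ PinWords perm12 ∧ IsStrict w ∧ EndsV w }

/-- `P^mix(ξ_i, ξ_j)` for `τ = ⊕[ξ_i, ξ_j]` with `|ξ_i| = s1`: pin words associated
with a pin representation of `τ` reading one of the two children in two pieces. -/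
def Pmix {m : ℕ} (τ : Equiv.Perm (Fin m)) (s1 : ℕ) : Set (List Letter) :=
  { w | ∃ (p : ℕ → Point) (p0 : Point) (f : Fin m ≃ Fin m),
      IsPinReprWith τ p f ∧ IsPinSeq (withOrigin p0 p) (m + 1) ∧
      WordOf (withOrigin p0 p) m w ∧
      (ReadInPieces { a : Fin m | (f a).val < s1 } 2 ∨
       ReadInPieces { a : Fin m | s1 ≤ (f a).val } 2) }

/-- The set of words `{13, 23, 33, 43, 1D, 4D}`. -/
def W13D : Set (List Letter) :=
  {[Letter.n1, Letter.n3], [Letter.n2, Letter.n3], [Letter.n3, Letter.n3],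
   [Letter.n4, Letter.n3], [Letter.n1, Letter.D], [Letter.n4, Letter.D]}

/-- The set of words `{13, 23, 33, 43, 1L, 2L}`. -/
def W13L : Set (List Letter) :=
  {[Letter.n1, Letter.n3], [Letter.n2, Letter.n3], [Letter.n3, Letter.n3],
   [Letter.n4, Letter.n3], [Letter.n1, Letter.L], [Letter.n2, Letter.L]}

/-- `M_2 = {UR, UL, DR, DL, RU, RD, LU, LD}`. -/
def M2Set : Set (List Letter) :=
  {[Letter.U, Letter.R], [Letter.U, Letter.L], [Letter.D, Letter.R], [Letter.D, Letter.L],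
   [Letter.R, Letter.U], [Letter.R, Letter.D], [Letter.L, Letter.U], [Letter.L, Letter.D]}

/-- `E^s_π`: the words `φ(u)` for `u ∈ P(π)` strict. -/
def EsSet {n : ℕ} (π : Equiv.Perm (Fin n)) : Set (List Letter) :=
  { v | ∃ u ∈ PinWords π, IsStrict u ∧ v ∈ phiSet u }

/-- `E^qs_π`: the words `φ(u^(2))` for `u = u^(1)u^(2) ∈ P(π)` quasi-strict. -/
def EqsSet {n : ℕ} (π : Equiv.Perm (Fin n)) : Set (List Letter) :=
  { v | ∃ u ∈ PinWords π, IsQuasiStrict u ∧ ∃ u1 u2, IsSNLD u [u1, u2] ∧ v ∈ phiSet u2 }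


/-! ### Auxiliary machinery for Statement 4 -/

section Aux

open List

instance : Fintype Letter :=
  ⟨⟨{Letter.n1, Letter.n2, Letter.n3, Letter.n4, Letter.U, Letter.D, Letter.L, Letter.R},
    by decide⟩, fun x => by rcases x <;> decide⟩

instance (c : Letter) : Decidable (IsVert c) := by unfold IsVert; infer_instance
instance (c : Letter) : Decidable (IsHoriz c) := by unfold IsHoriz; infer_instance

/-- A strict word is nonempty. -/
lemma strict_ne_nil {v : List Letter} (h : IsStrict v) : v ≠ [] := by
  obtain ⟨c, cs, rfl, _, _⟩ := h; simp

/-- The flatten of a nonempty list of strict words starts with a numeral. -/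
lemma flatten_strict_head {us : List (List Letter)} (h : ∀ v ∈ us, IsStrict v)
    (hne : us ≠ []) : ∃ a rest, us.flatten = a :: rest ∧ a.IsNumeral := by
  cases us with
  | nil => exact absurd rfl hne
  | cons v vs =>
    obtain ⟨c, cs, rfl, hc, _⟩ := h v (by simp)
    exact ⟨c, cs ++ vs.flatten, by simp, hc⟩

/-- Uniqueness of the strong numeral-led factor decomposition. -/
lemma snld_unique (us₁ : List (List Letter)) : ∀ (u : List Letter) (us₂ : List (List Letter)),
    IsSNLD u us₁ → IsSNLD u us₂ → us₁ = us₂ := by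
  induction us₁ with
  | nil =>
    intro u us₂ h₁ h₂
    obtain ⟨hf₁, _⟩ := h₁
    obtain ⟨hf₂, hs₂⟩ := h₂
    cases us₂ with
    | nil => rfl
    | cons v vs =>
      obtain ⟨c, cs, rfl, _, _⟩ := hs₂ _ List.mem_cons_self
      rw [← hf₁] at hf₂
      simp at hf₂
  | cons v vs ih =>
    intro u us₂ h₁ h₂
    obtain ⟨hf₁, hs₁⟩ := h₁
    obtain ⟨hf₂, hs₂⟩ := h₂
    cases us₂ with
    | nil =>
      obtain ⟨c, cs, hv, _, _⟩ := hs₁ _ List.mem_cons_self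
      rw [← hf₂] at hf₁
      simp [hv] at hf₁
    | cons v' vs' =>
      have h : v ++ vs.flatten = v' ++ vs'.flatten := by
        have := hf₁.trans hf₂.symm
        simpa using this
      have key : v = v' := by
        rcases List.append_eq_append_iff.1 h with ⟨a', ha', hA⟩ | ⟨c', hc', hB⟩
        · cases a' with
          | nil => simp [ha']
          | cons e a'' =>
            exfalso
            have hvs : vs ≠ [] := by rintro rfl; simp at hA
            obtain ⟨n0, rest, hfl, hnum⟩ :=
              flatten_strict_head (fun x hx => hs₁ x (List.mem_cons_of_mem _ hx)) hvs
            rw [hfl] at hA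
            obtain ⟨rfl, -⟩ := List.cons_eq_cons.mp hA
            obtain ⟨c', cs', hv', hc', hd'⟩ := hs₂ _ List.mem_cons_self
            obtain ⟨c0, cs0, hv0, hc0, hd0⟩ := hs₁ _ List.mem_cons_self
            have he : n0 ∈ cs' := by
              rw [hv0] at ha'
              rw [hv'] at ha'
              obtain ⟨-, h2⟩ := List.cons_eq_cons.mp ha'
              rw [h2]; simp
            have hdir := hd' n0 he
            rw [Letter.IsDirection] at hdir
            rw [Letter.IsNumeral] at hnum
            rw [hnum] at hdir
            exact absurd hdir (by decide)
        · cases c' with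
          | nil => simpa using hc'
          | cons e a'' =>
            exfalso
            have hvs : vs' ≠ [] := by rintro rfl; simp at hB
            obtain ⟨n0, rest, hfl, hnum⟩ :=
              flatten_strict_head (fun x hx => hs₂ x (List.mem_cons_of_mem _ hx)) hvs
            rw [hfl] at hB
            obtain ⟨rfl, -⟩ := List.cons_eq_cons.mp hB
            obtain ⟨c0, cs0, hv0, hc0, hd0⟩ := hs₁ _ List.mem_cons_self
            obtain ⟨c1, cs1, hv1, hc1, hd1⟩ := hs₂ _ List.mem_cons_self
            have he : n0 ∈ cs0 := by
              rw [hv1] at hc'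
              rw [hv0] at hc'
              obtain ⟨-, h2⟩ := List.cons_eq_cons.mp hc'
              rw [h2]; simp
            have hdir := hd0 n0 he
            rw [Letter.IsDirection] at hdir
            rw [Letter.IsNumeral] at hnum
            rw [hnum] at hdir
            exact absurd hdir (by decide)
      subst key
      have hfe : vs.flatten = vs'.flatten := List.append_cancel_left h
      rw [ih vs.flatten vs' ⟨rfl, fun x hx => hs₁ x (List.mem_cons_of_mem _ hx)⟩
        ⟨hfe.symm, fun x hx => hs₂ x (List.mem_cons_of_mem _ hx)⟩]

/-- The generic "factorization" predicate underlying both sides of Statement 4. -/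
def FactC (C : List Letter → List Letter → List Letter → Prop)
    (us : List (List Letter)) (w : List Letter) : Prop :=
  ∃ vs ws : List (List Letter), ws.length = us.length ∧ vs.length = us.length + 1 ∧
    w = interleave vs ws ∧ ∀ i < us.length, C (vs.getD i []) (ws.getD i []) (us.getD i [])

/-- Recursive form of `FactC`. -/
def Glue (C : List Letter → List Letter → List Letter → Prop) :
    List (List Letter) → List Letter → Prop
  | [], _ => True
  | ui :: us, w => ∃ v wi r, w = v ++ wi ++ r ∧ C v wi ui ∧ Glue C us r

lemma factC_iff_glue (C : List Letter → List Letter → List Letter → Prop)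
    (us : List (List Letter)) (w : List Letter) : FactC C us w ↔ Glue C us w := by
  induction us generalizing w with
  | nil =>
    constructor
    · intro _; trivial
    · intro _
      exact ⟨[w], [], rfl, rfl, by simp [interleave], by simp⟩
  | cons ui us ih =>
    constructor
    · rintro ⟨vs, ws, hlw, hlv, rfl, hC⟩
      cases vs with
      | nil => simp at hlv
      | cons v vs =>
        cases ws with
        | nil => simp at hlw
        | cons wi ws =>
          refine ⟨v, wi, interleave vs ws, rfl, by simpa using hC 0 (by simp), ?_⟩
          refine (ih _).1 ⟨vs, ws, by simpa using hlw, by simpa using hlv, rfl, ?_⟩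
          intro i hi
          simpa using hC (i + 1) (by simpa using hi)
    · rintro ⟨v, wi, r, rfl, hC, hg⟩
      obtain ⟨vs, ws, h1, h2, rfl, h4⟩ := (ih r).2 hg
      refine ⟨v :: vs, wi :: ws, by simp [h1], by simp [h2], rfl, ?_⟩
      intro i hi
      cases i with
      | zero => simpa using hC
      | succ i => simpa using h4 i (by simpa using hi)

/-- The right-hand-side piece condition of Statement 4. -/
def CR (_v wi ui : List Letter) : Prop :=
  wi ∈ SPset ∪ MSet ∧ ∃ pw ∈ phiSet wi, ∃ pu ∈ phiSet ui, pu <:+: pw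

/-- Core geometric lemma: two consecutive vertically-extreme separating pins
are impossible. -/
lemma coreV (q : ℕ → Point) (i : ℕ) (h2 : 2 ≤ i)
    (sA : SepCond q i) (sB : SepCond q (i + 1))
    (eA : AboveAll q i ∨ BelowAll q i)
    (eB : AboveAll q (i + 1) ∨ BelowAll q (i + 1)) : False := by
  obtain ⟨k, rfl⟩ : ∃ k, i = k + 2 := ⟨i - 2, by omega⟩
  simp only [SepCond, VLineSep, HLineSep, AboveAll, BelowAll,
    show k + 2 - 1 = k + 1 by omega, show k + 2 + 1 = k + 3 by omega,
    show k + 3 - 1 = k + 2 by omega] at sA sB eA eB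
  have hx : (∃ j1 < k + 2, (q j1).1 < (q (k + 2)).1) ∧
      (∃ j2 < k + 2, (q (k + 2)).1 < (q j2).1) := by
    rcases sA with hv | hh
    · rcases hv with ⟨h1, h2⟩ | ⟨h1, h2⟩
      · exact ⟨⟨k + 1, by omega, h1⟩, ⟨0, by omega, h2 0 (by omega)⟩⟩
      · exact ⟨⟨0, by omega, h2 0 (by omega)⟩, ⟨k + 1, by omega, h1⟩⟩
    · exfalso
      rcases hh with ⟨h1, h2⟩ | ⟨h1, h2⟩ <;> rcases eA with ha | ha
      · exact absurd (ha 0 (by omega)) (by have := h2 0 (by omega); linarith)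
      · exact absurd h1 (by have := ha (k + 1) (by omega); linarith)
      · exact absurd h1 (by have := ha (k + 1) (by omega); linarith)
      · exact absurd (ha 0 (by omega)) (by have := h2 0 (by omega); linarith)
  obtain ⟨⟨j1, hj1, hlt1⟩, ⟨j2, hj2, hlt2⟩⟩ := hx
  rcases sB with hv | hh
  · rcases hv with ⟨h1, h2⟩ | ⟨h1, h2⟩
    · have := h2 j1 (by omega); linarith
    · have := h2 j2 (by omega); linarith
  · rcases hh with ⟨h1, h2⟩ | ⟨h1, h2⟩ <;> rcases eB with hb | hb
    · have := h2 0 (by omega); have := hb 0 (by omega); linarith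
    · have := hb (k + 2) (by omega); linarith
    · have := hb (k + 2) (by omega); linarith
    · have := h2 0 (by omega); have := hb 0 (by omega); linarith

lemma coreH (q : ℕ → Point) (i : ℕ) (h2 : 2 ≤ i)
    (sA : SepCond q i) (sB : SepCond q (i + 1))
    (eA : RightAll q i ∨ LeftAll q i)
    (eB : RightAll q (i + 1) ∨ LeftAll q (i + 1)) : False := by
  refine coreV (fun n => ((q n).2, (q n).1)) i h2 ?_ ?_ ?_ ?_
  · exact Or.symm sA
  · exact Or.symm sB
  · exact eA
  · exact eB

/-- In a pin word, two adjacent letters are never both vertical nor both horizontal. -/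
lemma altPair {W : List Letter} (hW : IsPinWord W) {a b : Letter} (h : [a, b] <:+: W) :
    ¬(IsVert a ∧ IsVert b) ∧ ¬(IsHoriz a ∧ IsHoriz b) := by
  obtain ⟨n, σ, p, p0, hrep, hseq, hword⟩ := hW
  obtain ⟨hlen, hlet⟩ := hword
  obtain ⟨s, t, hst⟩ := h
  have hlt : s.length + 1 < n := by
    rw [← hlen, ← hst]; simp
  have ha : W.getD s.length Letter.U = a := by
    rw [← hst, List.append_assoc,
      List.getD_append_right _ _ _ _ le_rfl, Nat.sub_self]
    rfl
  have hb : W.getD (s.length + 1) Letter.U = b := by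
    rw [← hst, List.append_assoc,
      List.getD_append_right _ _ _ _ (by omega)]
    have : s.length + 1 - s.length = 1 := by omega
    rw [this]
    rfl
  have la := hlet s.length (by omega)
  have lb := hlet (s.length + 1) (by omega)
  rw [ha] at la
  rw [hb] at lb
  constructor <;> rintro ⟨h1, h2⟩
  · rcases h1 with rfl | rfl <;> rcases h2 with rfl | rfl
    · obtain ⟨hi2, sep1, ext1⟩ := la
      obtain ⟨-, sep2, ext2⟩ := lb
      exact coreV _ _ hi2 sep1 sep2 (Or.inl ext1) (Or.inl ext2)
    · obtain ⟨hi2, sep1, ext1⟩ := la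
      obtain ⟨-, sep2, ext2⟩ := lb
      exact coreV _ _ hi2 sep1 sep2 (Or.inl ext1) (Or.inr ext2)
    · obtain ⟨hi2, sep1, ext1⟩ := la
      obtain ⟨-, sep2, ext2⟩ := lb
      exact coreV _ _ hi2 sep1 sep2 (Or.inr ext1) (Or.inl ext2)
    · obtain ⟨hi2, sep1, ext1⟩ := la
      obtain ⟨-, sep2, ext2⟩ := lb
      exact coreV _ _ hi2 sep1 sep2 (Or.inr ext1) (Or.inr ext2)
  · rcases h1 with rfl | rfl <;> rcases h2 with rfl | rfl
    · obtain ⟨hi2, sep1, ext1⟩ := la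
      obtain ⟨-, sep2, ext2⟩ := lb
      exact coreH _ _ hi2 sep1 sep2 (Or.inr ext1) (Or.inr ext2)
    · obtain ⟨hi2, sep1, ext1⟩ := la
      obtain ⟨-, sep2, ext2⟩ := lb
      exact coreH _ _ hi2 sep1 sep2 (Or.inr ext1) (Or.inl ext2)
    · obtain ⟨hi2, sep1, ext1⟩ := la
      obtain ⟨-, sep2, ext2⟩ := lb
      exact coreH _ _ hi2 sep1 sep2 (Or.inl ext1) (Or.inr ext2)
    · obtain ⟨hi2, sep1, ext1⟩ := la
      obtain ⟨-, sep2, ext2⟩ := lb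
      exact coreH _ _ hi2 sep1 sep2 (Or.inl ext1) (Or.inl ext2)

/-- A factor of a pin word consisting of at least two direction letters is in `M`. -/
lemma mem_MSet_of_infix {W z : List Letter} (hW : IsPinWord W) (hz : z <:+: W)
    (hdir : ∀ l ∈ z, l.IsDirection) (hlen : 2 ≤ z.length) : z ∈ MSet :=
  ⟨hlen, hdir, fun _ _ hac => altPair hW (hac.trans hz)⟩

lemma aboveAll_shift {q : ℕ → Point} {off i : ℕ} (h : AboveAll q (off + i)) :
    AboveAll (fun k => q (off + k)) i := fun j hj => h (off + j) (by omega)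

lemma belowAll_shift {q : ℕ → Point} {off i : ℕ} (h : BelowAll q (off + i)) :
    BelowAll (fun k => q (off + k)) i := fun j hj => h (off + j) (by omega)

lemma rightAll_shift {q : ℕ → Point} {off i : ℕ} (h : RightAll q (off + i)) :
    RightAll (fun k => q (off + k)) i := fun j hj => h (off + j) (by omega)

lemma leftAll_shift {q : ℕ → Point} {off i : ℕ} (h : LeftAll q (off + i)) :
    LeftAll (fun k => q (off + k)) i := fun j hj => h (off + j) (by omega)

lemma sep_shift {q : ℕ → Point} {off i : ℕ} (hi : 1 ≤ i) (h : SepCond q (off + i)) :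
    SepCond (fun k => q (off + k)) i := by
  have e : off + i - 1 = off + (i - 1) := by omega
  simp only [SepCond, VLineSep, HLineSep] at h ⊢
  rw [e] at h
  rcases h with (⟨ha, hb⟩ | ⟨ha, hb⟩) | (⟨ha, hb⟩ | ⟨ha, hb⟩)
  · exact Or.inl (Or.inl ⟨ha, fun j hj => hb (off + j) (by omega)⟩)
  · exact Or.inl (Or.inr ⟨ha, fun j hj => hb (off + j) (by omega)⟩)
  · exact Or.inr (Or.inl ⟨ha, fun j hj => hb (off + j) (by omega)⟩)
  · exact Or.inr (Or.inr ⟨ha, fun j hj => hb (off + j) (by omega)⟩)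

lemma indep_shift {q : ℕ → Point} {off i : ℕ} (h : IndepCond q (off + i)) :
    IndepCond (fun k => q (off + k)) i := by
  obtain ⟨h1, h2⟩ := h
  constructor
  · rintro ⟨⟨j, hj, hja⟩, ⟨j', hj', hjb⟩⟩
    exact h1 ⟨⟨off + j, by omega, hja⟩, ⟨off + j', by omega, hjb⟩⟩
  · rintro ⟨⟨j, hj, hja⟩, ⟨j', hj', hjb⟩⟩
    exact h2 ⟨⟨off + j, by omega, hja⟩, ⟨off + j', by omega, hjb⟩⟩

lemma shiftPinSeq {p : ℕ → Point} {n : ℕ} (off m : ℕ) (h : IsPinSeq p n)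
    (hom : off + m ≤ n) : IsPinSeq (fun k => p (off + k)) m := by
  obtain ⟨hd, hc⟩ := h
  refine ⟨fun i hi j hj hij =>
    hd (off + i) (by omega) (off + j) (by omega) (by omega), ?_⟩
  intro i h1 h2
  obtain ⟨ho, hs⟩ := hc (off + i) (by omega) (by omega)
  constructor
  · rcases ho with h | h | h | h
    · exact Or.inl (rightAll_shift h)
    · exact Or.inr (Or.inl (leftAll_shift h))
    · exact Or.inr (Or.inr (Or.inl (aboveAll_shift h)))
    · exact Or.inr (Or.inr (Or.inr (belowAll_shift h)))
  · rcases hs with h | h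
    · exact Or.inl (sep_shift h1 h)
    · exact Or.inr (indep_shift h)

lemma indep_one (q : ℕ → Point) : IndepCond q 1 := by
  constructor <;> rintro ⟨⟨j, hj, hja⟩, ⟨j', hj', hjb⟩⟩ <;>
    (obtain rfl : j = 0 := by omega) <;> (obtain rfl : j' = 0 := by omega) <;> linarith

lemma rankEquiv {m : ℕ} (X : Fin m → ℝ) (hX : Function.Injective X) :
    ∃ e : Fin m ≃ Fin m, ∀ a b, X a < X b ↔ e a < e b := by
  have sm : StrictMono (X ∘ Tuple.sort X) :=
    (Tuple.monotone_sort X).strictMono_of_injective (hX.comp (Equiv.injective _))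
  refine ⟨(Tuple.sort X).symm, fun a b => ?_⟩
  have hA : X a = (X ∘ Tuple.sort X) ((Tuple.sort X).symm a) := by simp
  have hB : X b = (X ∘ Tuple.sort X) ((Tuple.sort X).symm b) := by simp
  rw [hA, hB]
  exact sm.lt_iff_lt

/-- Core of `strictFactorPin`, with the factor given by an index shift. -/
lemma pinWord_shift {p : ℕ → Point} {p0 : Point} {n : ℕ} {W : List Letter}
    (hseq : IsPinSeq (withOrigin p0 p) (n + 1)) (hpseq : IsPinSeq p n)
    (hlet : ∀ i < n, LetterIs (withOrigin p0 p) (i + 1) (W.getD i Letter.U))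
    (off m : ℕ) (hom : off + m ≤ n) (z : List Letter) (hz : IsStrict z)
    (hmz : z.length = m)
    (hWz : ∀ i < m, W.getD (off + i) Letter.U = z.getD i Letter.U) :
    IsPinWord z := by
  have hq' : withOrigin (withOrigin p0 p off) (fun k => p (off + k)) =
      fun k => withOrigin p0 p (off + k) := by
    funext i; cases i <;> rfl
  have hinjX : Function.Injective (fun i : Fin m => (p (off + i.val)).1) := by
    intro a b hab
    by_contra hne
    have ha := a.isLt
    have hb := b.isLt
    have hne' : off + a.val ≠ off + b.val := by
      have : a.val ≠ b.val := fun hh => hne (Fin.ext hh)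
      omega
    exact (hpseq.1 (off + a.val) (by omega) (off + b.val) (by omega) hne').1 hab
  have hinjY : Function.Injective (fun i : Fin m => (p (off + i.val)).2) := by
    intro a b hab
    by_contra hne
    have ha := a.isLt
    have hb := b.isLt
    have hne' : off + a.val ≠ off + b.val := by
      have : a.val ≠ b.val := fun hh => hne (Fin.ext hh)
      omega
    exact (hpseq.1 (off + a.val) (by omega) (off + b.val) (by omega) hne').2 hab
  obtain ⟨eX, heX⟩ := rankEquiv _ hinjX
  obtain ⟨eY, heY⟩ := rankEquiv _ hinjY
  refine ⟨m, eX.symm.trans eY, fun k => p (off + k), withOrigin p0 p off,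
    ⟨eX, shiftPinSeq off m hpseq hom, ?_⟩, ?_, hmz, ?_⟩
  · intro j k
    constructor
    · exact heX j k
    · have e1 : (eX.symm.trans eY) (eX j) = eY j := by simp
      have e2 : (eX.symm.trans eY) (eX k) = eY k := by simp
      rw [e1, e2]
      exact heY j k
  · rw [hq']
    exact shiftPinSeq off (m + 1) hseq (by omega)
  · intro i hi
    have hL := hlet (off + i) (by omega)
    rw [hWz i hi] at hL
    rw [hq']
    obtain ⟨c, cs, hzc, hcn, hds⟩ := hz
    rcases Nat.eq_zero_or_pos i with rfl | hpos
    · have hz0 : z.getD 0 Letter.U = c := by rw [hzc]; rfl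
      simp only [Nat.add_zero] at hL
      simp only [Nat.zero_add]
      rw [hz0] at hL ⊢
      have hcc : c.isNum = true := hcn
      rcases c <;> simp [Letter.isNum] at hcc <;>
        first
          | exact ⟨indep_one _, rightAll_shift hL.2.1, aboveAll_shift hL.2.2⟩
          | exact ⟨indep_one _, leftAll_shift hL.2.1, aboveAll_shift hL.2.2⟩
          | exact ⟨indep_one _, leftAll_shift hL.2.1, belowAll_shift hL.2.2⟩
          | exact ⟨indep_one _, rightAll_shift hL.2.1, belowAll_shift hL.2.2⟩
    · have hzm : z.getD i Letter.U ∈ cs := by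
        rw [hzc]
        obtain ⟨i', rfl⟩ : ∃ i', i = i' + 1 := ⟨i - 1, by omega⟩
        rw [List.getD_cons_succ]
        rw [List.getD_eq_getElem _ _ (by
          have : z.length = cs.length + 1 := by rw [hzc]; simp
          omega)]
        exact List.getElem_mem _
      have hdd : (z.getD i Letter.U).isNum = false := hds _ hzm
      rcases hget : z.getD i Letter.U with _|_|_|_|_|_|_|_ <;> rw [hget] at hL hdd <;>
        simp [Letter.isNum] at hdd
      · have hsep : SepCond (withOrigin p0 p) (off + (i + 1)) := hL.2.1
        have hext : AboveAll (withOrigin p0 p) (off + (i + 1)) := hL.2.2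
        exact ⟨by omega, sep_shift (by omega) hsep, aboveAll_shift hext⟩
      · have hsep : SepCond (withOrigin p0 p) (off + (i + 1)) := hL.2.1
        have hext : BelowAll (withOrigin p0 p) (off + (i + 1)) := hL.2.2
        exact ⟨by omega, sep_shift (by omega) hsep, belowAll_shift hext⟩
      · have hsep : SepCond (withOrigin p0 p) (off + (i + 1)) := hL.2.1
        have hext : LeftAll (withOrigin p0 p) (off + (i + 1)) := hL.2.2
        exact ⟨by omega, sep_shift (by omega) hsep, leftAll_shift hext⟩
      · have hsep : SepCond (withOrigin p0 p) (off + (i + 1)) := hL.2.1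
        have hext : RightAll (withOrigin p0 p) (off + (i + 1)) := hL.2.2
        exact ⟨by omega, sep_shift (by omega) hsep, rightAll_shift hext⟩

/-- A strict contiguous factor of a pin word is itself a pin word. -/
lemma strictFactorPin {W x z y : List Letter} (hW : IsPinWord W) (hw : W = x ++ z ++ y)
    (hz : IsStrict z) : IsPinWord z := by
  obtain ⟨n, σ, p, p0, hrep, hseq, hword⟩ := hW
  obtain ⟨hlen, hlet⟩ := hword
  obtain ⟨f0, hf0⟩ := hrep
  have homn : x.length + z.length ≤ n := by rw [← hlen, hw]; simp
  refine pinWord_shift hseq hf0.1 hlet x.length z.length homn z hz rfl ?_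
  intro i hi
  rw [hw, List.append_assoc, List.getD_append_right _ _ _ _ (by omega)]
  have e : x.length + i - x.length = i := by omega
  rw [e]
  exact List.getD_append _ _ _ _ hi

/-- Structure of the elements of `phiSet` on strict words. -/
lemma phiSet_struct {c : Letter} {cs pz : List Letter} (hc : c.isNum = true)
    (hcs : ∀ d ∈ cs, d.isNum = false) (hm : pz ∈ phiSet (c :: cs)) :
    ∃ P0 P1 : Letter, pz = P0 :: P1 :: cs ∧ P0.isNum = false ∧ P1.isNum = false ∧
      phiInv2 P0 P1 = c ∧ ∀ e t', cs = e :: t' → phi2 c e = [P0, P1, e] := by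
  cases cs with
  | nil =>
    rcases c <;> simp [phiSet, phi1, Letter.isNum] at hm hc <;>
      rcases hm with rfl | rfl <;>
      exact ⟨_, _, rfl, rfl, rfl, rfl, fun e t' h => by simp at h⟩
  | cons d ds =>
    have hd := hcs d (by simp)
    rcases c <;> rcases d <;> simp [phiSet, phi2, Letter.isNum] at hm hc hd <;>
      subst hm <;>
      exact ⟨_, _, rfl, rfl, rfl, rfl, fun e t' h => by
        obtain ⟨rfl, -⟩ := List.cons_eq_cons.mp h; rfl⟩

lemma phiSet_nonempty {c : Letter} {cs : List Letter} (hc : c.isNum = true)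
    (hcs : ∀ d ∈ cs, d.isNum = false) : ∃ pz, pz ∈ phiSet (c :: cs) := by
  cases cs with
  | nil =>
    rcases c <;> simp [Letter.isNum] at hc <;>
      first
        | exact ⟨[Letter.U, Letter.R], Or.inl rfl⟩
        | exact ⟨[Letter.U, Letter.L], Or.inl rfl⟩
        | exact ⟨[Letter.D, Letter.L], Or.inl rfl⟩
        | exact ⟨[Letter.R, Letter.D], Or.inl rfl⟩
  | cons d ds => exact ⟨phi2 c d ++ ds, by simp [phiSet, hc]⟩

/-- Case-bash lemma: structure of `phi2` with a numeral first letter. -/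
lemma phi2_third {c d : Letter} (hc : c.isNum = true) (hd : d.isNum = false) :
    ∃ A B : Letter, phi2 c d = [A, B, d] ∧ [B, d] ∈ phi1 (quadNum c d) ∧
      ∀ e : Letter, e.isNum = false → ¬(IsVert d ∧ IsVert e) → ¬(IsHoriz d ∧ IsHoriz e) →
        phi2 (quadNum c d) e = [B, d, e] := by
  rcases c <;> rcases d <;> simp [Letter.isNum] at hc hd <;>
    (refine ⟨_, _, rfl, ?_, ?_⟩ <;>
      first
        | exact Or.inl rfl
        | exact Or.inr rfl
        | decide)

/-- Case-bash lemma: `phi1`/`phi2` on alternating direction pairs. -/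
lemma phi2_dir {c d : Letter} (hc : c.isNum = false) (hd : d.isNum = false)
    (h1 : ¬(IsVert c ∧ IsVert d)) (h2 : ¬(IsHoriz c ∧ IsHoriz d)) :
    [c, d] ∈ phi1 (quadNum c d) ∧
      ∀ e : Letter, e.isNum = false → ¬(IsVert d ∧ IsVert e) → ¬(IsHoriz d ∧ IsHoriz e) →
        phi2 (quadNum c d) e = [c, d, e] := by
  rcases c <;> rcases d <;> simp [Letter.isNum] at hc hd <;>
    first
      | (refine absurd ?_ h1; decide)
      | (refine absurd ?_ h2; decide)
      | (refine ⟨?_, ?_⟩ <;>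
          first
            | exact Or.inl rfl
            | exact Or.inr rfl
            | decide)

/-- Forward per-piece lemma. -/
lemma pieceFwd {W pre v wi r ui : List Letter} (hW : IsPinWord W)
    (hw : W = pre ++ (v ++ wi ++ r)) (hui : IsStrict ui) (hpc : PieceCond v wi ui) :
    ∃ v' wi', v ++ wi = v' ++ wi' ∧ CR v' wi' ui := by
  obtain ⟨a, s, huic, ha, hs⟩ := hui
  rcases hpc with ⟨c, cs, hwic, hc, hwu⟩ | ⟨d, ds, c, hwic, hd, hvne, hvl, huiq⟩
  · -- first disjunct : wi = ui, numeral-led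
    refine ⟨v, wi, rfl, ?_, ?_⟩
    · exact Or.inl ⟨strictFactorPin (x := pre ++ v) (y := r) hW (by rw [hw]; simp)
          (by rw [hwu, huic]; exact ⟨a, s, rfl, ha, hs⟩),
        by rw [hwu, huic]; exact ⟨a, s, rfl, ha, hs⟩⟩
    · rw [hwu, huic]
      obtain ⟨pz, hpz⟩ := phiSet_nonempty ha hs
      exact ⟨pz, hpz, pz, hpz, List.infix_refl _⟩
  · -- second disjunct
    obtain ⟨v₀, rfl⟩ : ∃ v₀, v = v₀ ++ [c] := by
      rcases List.eq_nil_or_concat v with rfl | ⟨L, b, rfl⟩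
      · exact absurd rfl hvne
      · rw [List.concat_eq_append, List.getLast?_concat] at hvl
        refine ⟨L, ?_⟩
        rw [List.concat_eq_append, Option.some.inj hvl]
    subst hwic
    obtain ⟨ha2, rfl⟩ : a = quadNum c d ∧ s = ds := by
      have h0 := huic.symm.trans huiq
      exact List.cons_eq_cons.mp h0
    have hqn : (quadNum c d).isNum = true := by rw [← ha2]; exact ha
    have heq : (v₀ ++ [c]) ++ (d :: s) = v₀ ++ (c :: d :: s) := by simp
    have hfacW : W = (pre ++ v₀) ++ (c :: d :: s) ++ r := by rw [hw]; simp
    by_cases hcnum : c.isNum = true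
    · -- preceding letter is a numeral : strict piece
      obtain ⟨A, B, hAB, hmem1, hshift⟩ := phi2_third hcnum hd
      have hstrict : IsStrict (c :: d :: s) := ⟨c, d :: s, rfl, hcnum, by
        intro l hl
        rcases List.mem_cons.mp hl with rfl | hl
        · exact hd
        · exact hs l hl⟩
      have hpin : IsPinWord (c :: d :: s) := strictFactorPin hW hfacW hstrict
      have hpwmem : phi2 c d ++ s ∈ phiSet (c :: d :: s) := by simp [phiSet, hcnum]
      cases s with
      | nil =>
        refine ⟨v₀, c :: d :: [], heq, Or.inl ⟨hpin, hstrict⟩,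
          phi2 c d ++ [], hpwmem, [B, d], ?_, ?_⟩
        · rw [huic, ha2]
          simp only [phiSet, hqn, if_true]
          exact hmem1
        · rw [hAB]
          exact ⟨[A], [], by simp⟩
      | cons e s' =>
        have hinf : [d, e] <:+: W := ⟨pre ++ v₀ ++ [c], s' ++ r, by rw [hfacW]; simp⟩
        have halt := altPair hW hinf
        have he : e.isNum = false := hs e (by simp)
        have heq2 := hshift e he halt.1 halt.2
        refine ⟨v₀, c :: d :: e :: s', heq, Or.inl ⟨hpin, hstrict⟩,
          phi2 c d ++ (e :: s'), hpwmem, phi2 (quadNum c d) e ++ s', ?_, ?_⟩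
        · rw [huic, ha2]
          simp [phiSet, hqn]
        · rw [heq2, hAB]
          exact ⟨[A], [], by simp⟩
    · -- preceding letter is a direction : M piece
      have hcd : c.isNum = false := by simpa using hcnum
      have hinf1 : [c, d] <:+: W := ⟨pre ++ v₀, s ++ r, by rw [hfacW]; simp⟩
      have halt1 := altPair hW hinf1
      obtain ⟨hmem1, hshift⟩ := phi2_dir hcd hd halt1.1 halt1.2
      have hdirs : ∀ l ∈ c :: d :: s, l.IsDirection := by
        intro l hl
        rcases List.mem_cons.mp hl with rfl | hl
        · exact hcd
        · rcases List.mem_cons.mp hl with rfl | hl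
          · exact hd
          · exact hs l hl
      have hMS : (c :: d :: s) ∈ MSet :=
        mem_MSet_of_infix hW ⟨pre ++ v₀, r, by rw [hfacW]⟩ hdirs (by simp)
      have hpwmem : (c :: d :: s) ∈ phiSet (c :: d :: s) := by simp [phiSet, hcd]
      cases s with
      | nil =>
        refine ⟨v₀, c :: d :: [], heq, Or.inr hMS, c :: d :: [], hpwmem, [c, d], ?_,
          List.infix_refl _⟩
        rw [huic, ha2]
        simp only [phiSet, hqn, if_true]
        exact hmem1
      | cons e s' =>
        have hinf : [d, e] <:+: W := ⟨pre ++ v₀ ++ [c], s' ++ r, by rw [hfacW]; simp⟩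
        have halt := altPair hW hinf
        have he : e.isNum = false := hs e (by simp)
        have heq2 := hshift e he halt.1 halt.2
        refine ⟨v₀, c :: d :: e :: s', heq, Or.inr hMS, c :: d :: e :: s', hpwmem,
          phi2 (quadNum c d) e ++ s', ?_, by rw [heq2]; exact List.infix_refl _⟩
        rw [huic, ha2]
        simp [phiSet, hqn]

/-- Backward per-piece lemma. -/
lemma pieceBwd {wi ui : List Letter} (hui : IsStrict ui)
    (hsp : wi ∈ SPset ∪ MSet)
    (hfac : ∃ pw ∈ phiSet wi, ∃ pu ∈ phiSet ui, pu <:+: pw) :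
    ∃ v' wi' r', wi = v' ++ wi' ++ r' ∧ ∀ v0 : List Letter, PieceCond (v0 ++ v') wi' ui := by
  obtain ⟨pw, hpw, pu, hpu, hinf⟩ := hfac
  obtain ⟨a, s, rfl, ha, hs⟩ := hui
  obtain ⟨P0, P1, rfl, hP0, hP1, hPinv, hPsh⟩ := phiSet_struct ha hs hpu
  rcases hsp with hSP | hM
  · -- wi is a strict pin word
    obtain ⟨hpin, hstr⟩ := hSP
    obtain ⟨c, t, rfl, hc, ht⟩ := hstr
    obtain ⟨Q0, Q1, hpwe, hQ0, hQ1, hQinv, hQsh⟩ := phiSet_struct hc ht hpw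
    subst hpwe
    obtain ⟨x, y, hxy⟩ := hinf
    rcases x with _ | ⟨X, _ | ⟨X', x''⟩⟩
    · -- occurrence at position 0 : ui is a prefix of wi
      obtain ⟨rfl, rfl, hts⟩ : P0 = Q0 ∧ P1 = Q1 ∧ s ++ y = t := by
        simpa using hxy
      have hac : a = c := by rw [← hPinv]; exact hQinv
      refine ⟨[], a :: s, y, ?_, fun v0 => Or.inl ⟨a, s, rfl, ha, rfl⟩⟩
      simp [hac, ← hts]
    · -- occurrence at position 1
      simp only [List.cons_append, List.nil_append, List.append_assoc] at hxy
      obtain ⟨hXQ, hxy2⟩ := List.cons_eq_cons.mp hxy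
      obtain ⟨hPQ, hxy3⟩ := List.cons_eq_cons.mp hxy2
      have hphi : phi2 c P1 = [Q0, Q1, P1] := hQsh P1 (s ++ y) hxy3.symm
      have hquad : quadNum c P1 = a := by
        have hcc : c.isNum = true := hc
        simp only [quadNum, hcc, if_true, hphi]
        rw [← hPQ]
        exact hPinv
      refine ⟨[c], P1 :: s, y, ?_, fun v0 => Or.inr ⟨P1, s, c, rfl, hP1, by simp,
        List.getLast?_concat, ?_⟩⟩
      · rw [← hxy3]; simp
      · rw [hquad]
    · -- occurrence at position ≥ 2
      simp only [List.cons_append, List.append_assoc] at hxy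
      obtain ⟨-, hxy2⟩ := List.cons_eq_cons.mp hxy
      obtain ⟨-, hxy3⟩ := List.cons_eq_cons.mp hxy2
      have hquad : quadNum P0 P1 = a := by
        simp only [quadNum, hP0, Bool.false_eq_true, if_false]
        exact hPinv
      refine ⟨c :: (x'' ++ [P0]), P1 :: s, y, ?_, fun v0 => Or.inr ⟨P1, s, P0, rfl, hP1,
        by simp, ?_, ?_⟩⟩
      · rw [← hxy3]; simp
      · rw [show v0 ++ (c :: (x'' ++ [P0])) = (v0 ++ c :: x'') ++ [P0] by simp]
        exact List.getLast?_concat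
      · rw [hquad]
  · -- wi ∈ M
    obtain ⟨hlen2, hdirs, -⟩ := hM
    have hpweq : pw = wi := by
      cases wi with
      | nil => simp at hlen2
      | cons w0 t =>
        cases t with
        | nil => simp at hlen2
        | cons w1 rest =>
          have h0 : w0.isNum = false := hdirs w0 (by simp)
          simpa [phiSet, h0] using hpw
    subst hpweq
    obtain ⟨x, y, hxy⟩ := hinf
    have hquad : quadNum P0 P1 = a := by
      simp only [quadNum, hP0, Bool.false_eq_true, if_false]
      exact hPinv
    refine ⟨x ++ [P0], P1 :: s, y, ?_, fun v0 => Or.inr ⟨P1, s, P0, rfl, hP1,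
      by simp, ?_, ?_⟩⟩
    · rw [← hxy]; simp
    · rw [show v0 ++ (x ++ [P0]) = (v0 ++ x) ++ [P0] by simp]
      exact List.getLast?_concat
    · rw [hquad]

lemma pieceCond_prepend {v0 v wi ui : List Letter} (h : PieceCond v wi ui) :
    PieceCond (v0 ++ v) wi ui := by
  rcases h with h | ⟨d, ds, c, h1, h2, h3, h4, h5⟩
  · exact Or.inl h
  · refine Or.inr ⟨d, ds, c, h1, h2, by simp [h3], ?_, h5⟩
    rcases List.eq_nil_or_concat v with rfl | ⟨L, b, rfl⟩
    · exact absurd rfl h3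
    · rw [List.concat_eq_append] at h4 ⊢
      rw [List.getLast?_concat] at h4
      rw [← List.append_assoc, List.getLast?_concat]
      exact h4

lemma glue_prepend (us : List (List Letter)) (r' r : List Letter)
    (h : Glue PieceCond us r) : Glue PieceCond us (r' ++ r) := by
  cases us with
  | nil => trivial
  | cons ui us =>
    obtain ⟨v, wi, t, rfl, hc, hg⟩ := h
    exact ⟨r' ++ v, wi, t, by simp, pieceCond_prepend hc, hg⟩

lemma fwdGlue {W : List Letter} (hW : IsPinWord W) (us : List (List Letter)) :
    ∀ (pre w : List Letter), W = pre ++ w →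
      (∀ ui ∈ us, IsStrict ui) → Glue PieceCond us w → Glue CR us w := by
  induction us with
  | nil => intro _ _ _ _ _; trivial
  | cons ui us ih =>
    rintro pre w hpre hstr ⟨v, wi, r, rfl, hc, hg⟩
    obtain ⟨v', wi', heq, hcr⟩ :=
      pieceFwd hW (by rw [hpre]) (hstr ui (by simp)) hc
    refine ⟨v', wi', r, by rw [← heq], hcr, ?_⟩
    exact ih (pre ++ (v ++ wi)) r (by rw [hpre]; simp)
      (fun x hx => hstr x (by simp [hx])) hg

lemma bwdGlue (us : List (List Letter)) : ∀ (w : List Letter),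
    (∀ ui ∈ us, IsStrict ui) → Glue CR us w → Glue PieceCond us w := by
  induction us with
  | nil => intro _ _ _; trivial
  | cons ui us ih =>
    rintro w hstr ⟨v, wi, r, rfl, ⟨hsp, hfac⟩, hg⟩
    obtain ⟨v', wi', r', hweq, hpc⟩ := pieceBwd (hstr ui (by simp)) hsp hfac
    refine ⟨v ++ v', wi', r' ++ r, by rw [hweq]; simp, hpc v, ?_⟩
    exact glue_prepend us r' r (ih r (fun x hx => hstr x (by simp [hx])) hg)

end Aux

/-- For pin words `u`, `w` with strong numeral-led factor decomposition
`u = u^(1) … u^(j)`: `u ≼ w` iff `w` factors as `v^(1)w^(1) … v^(j)w^(j)v^(j+1)` with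
every `w^(i) ∈ SP ∪ M` and `φ(w^(i))` having a factor in `φ(u^(i))`. -/
theorem statement_4 (u w : List Letter) (hu : IsPinWord u) (hw : IsPinWord w)
    (us : List (List Letter)) (hus : IsSNLD u us) :
    PinOrder u w ↔
      ∃ vs ws : List (List Letter), ws.length = us.length ∧ vs.length = us.length + 1 ∧
        w = interleave vs ws ∧
        ∀ i < us.length, (ws.getD i [] ∈ SPset ∪ MSet) ∧
          ∃ pw ∈ phiSet (ws.getD i []), ∃ pu ∈ phiSet (us.getD i []), pu <:+: pw := by
  constructor
  · rintro ⟨us', hsnld', hfact⟩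
    obtain rfl : us = us' := (snld_unique us' u us hsnld' hus).symm
    have hf : FactC PieceCond us w := hfact
    have hg := (factC_iff_glue PieceCond us w).1 hf
    have hg2 := fwdGlue hw us [] w rfl hus.2 hg
    obtain ⟨vs, ws, h1, h2, h3, h4⟩ := (factC_iff_glue CR us w).2 hg2
    exact ⟨vs, ws, h1, h2, h3, fun i hi => h4 i hi⟩
  · rintro ⟨vs, ws, h1, h2, h3, h4⟩
    have hf : FactC CR us w := ⟨vs, ws, h1, h2, h3, fun i hi => h4 i hi⟩
    have hg := (factC_iff_glue CR us w).1 hf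
    have hg2 := bwdGlue us w hus.2 hg
    exact ⟨us, hus, (factC_iff_glue PieceCond us w).2 hg2⟩

end PinStmt
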